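/- Spectral translation: Assume A is irreducible, B = diag(β_1,…,β_n) with β_i > 0, and Γ̄ = diag(g_1,…,g_n) with g_i > 0. If s(BA − Γ̄) > 0, then s(Γ̄⁻¹BA) > 1. -/

import Mathlib

open Matrix

/-- Spectral abscissa: the maximum of the real parts of the complex eigenvalues. -/
noncomputable def specAbs {n : ℕ} (M : Matrix (Fin n) (Fin n) ℝ) : ℝ :=
  sSup (Complex.re '' spectrum ℂ (M.map (Complex.ofReal ·)))

/-- Irreducibility of a matrix. -/
def MatIrreducible {n : ℕ} (A : Matrix (Fin n) (Fin n) ℝ) : Prop :=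
  ∀ S : Set (Fin n), S.Nonempty → S ≠ Set.univ → ∃ i ∈ S, ∃ j ∉ S, 0 < A i j

namespace Stmt13Aux

open Finset

variable {n : ℕ}

lemma mul_nonneg_entry {M N : Matrix (Fin n) (Fin n) ℝ} (hM : ∀ i j, 0 ≤ M i j)
    (hN : ∀ i j, 0 ≤ N i j) : ∀ i j, 0 ≤ (M * N) i j := by
  intro i j
  rw [Matrix.mul_apply]
  exact Finset.sum_nonneg fun k _ => mul_nonneg (hM i k) (hN k j)

lemma pow_nonneg_entry {M : Matrix (Fin n) (Fin n) ℝ} (hM : ∀ i j, 0 ≤ M i j) :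
    ∀ k, ∀ i j, 0 ≤ (M ^ k) i j := by
  intro k
  induction k with
  | zero => intro i j; simp [Matrix.one_apply]; positivity
  | succ k ih => rw [pow_succ]; exact mul_nonneg_entry ih hM

lemma one_add_nonneg {C : Matrix (Fin n) (Fin n) ℝ} (hC : ∀ i j, 0 ≤ C i j) :
    ∀ i j, 0 ≤ (1 + C) i j := by
  intro i j
  have : (1 + C) i j = (1 : Matrix (Fin n) (Fin n) ℝ) i j + C i j := rfl
  rw [this, Matrix.one_apply]
  by_cases h : i = j <;> simp [h]
  · linarith [hC j j]
  · exact hC i j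

lemma mulVec_nonneg {M : Matrix (Fin n) (Fin n) ℝ} {v : Fin n → ℝ}
    (hM : ∀ i j, 0 ≤ M i j) (hv : ∀ i, 0 ≤ v i) : ∀ i, 0 ≤ M.mulVec v i := by
  intro i
  simp only [Matrix.mulVec, dotProduct]
  exact Finset.sum_nonneg fun j _ => mul_nonneg (hM i j) (hv j)

lemma mulVec_pos {M : Matrix (Fin n) (Fin n) ℝ} {v : Fin n → ℝ}
    (hM : ∀ i j, 0 < M i j) (hv : ∀ i, 0 ≤ v i) (hvne : v ≠ 0) : ∀ i, 0 < M.mulVec v i := by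
  intro i
  obtain ⟨j0, hj0⟩ : ∃ j, 0 < v j := by
    by_contra h
    push_neg at h
    exact hvne (funext fun j => le_antisymm (h j) (hv j))
  have : M i j0 * v j0 ≤ M.mulVec v i := by
    simp only [Matrix.mulVec, dotProduct]
    exact Finset.single_le_sum (fun j _ => mul_nonneg (le_of_lt (hM i j)) (hv j)) (mem_univ j0)
  exact lt_of_lt_of_le (mul_pos (hM i j0) hj0) this

/-- key positivity: `(1+C)^(n-1)` has strictly positive entries when `C` is nonneg irreducible -/
lemma pow_one_add_pos {C : Matrix (Fin n) (Fin n) ℝ} (hn : 1 ≤ n) (hC : ∀ i j, 0 ≤ C i j)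
    (hirr : MatIrreducible C) : ∀ i j, 0 < ((1 + C) ^ (n - 1)) i j := by
  intro i
  classical
  set P : ℕ → Matrix (Fin n) (Fin n) ℝ := fun k => (1 + C) ^ k with hP
  have hPnn : ∀ k a b, 0 ≤ P k a b := fun k => pow_nonneg_entry (one_add_nonneg hC) k
  set S : ℕ → Set (Fin n) := fun k => {j | 0 < P k i j} with hS
  have hstep : ∀ k a b, P k i a * (1 + C) a b ≤ P (k + 1) i b := by
    intro k a b
    have : P (k+1) = P k * (1 + C) := by simp only [hP]; rw [pow_succ]
    rw [this, Matrix.mul_apply]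
    exact Finset.single_le_sum
      (fun c _ => mul_nonneg (hPnn k i c) (one_add_nonneg hC c b)) (mem_univ a)
  have hdiag : ∀ a, (1 : ℝ) ≤ (1 + C) a a := by
    intro a
    have : (1 + C) a a = 1 + C a a := by simp [Matrix.add_apply, Matrix.one_apply]
    rw [this]; linarith [hC a a]
  have hmono : ∀ k, S k ⊆ S (k + 1) := by
    intro k j hj
    have h1 : P k i j * 1 ≤ P k i j * (1 + C) j j :=
      mul_le_mul_of_nonneg_left (hdiag j) (hPnn k i j)
    have := hstep k j j
    have hj' : 0 < P k i j := hj
    simp only [hS, Set.mem_setOf_eq]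
    nlinarith
  have hmem : ∀ k, i ∈ S k := by
    intro k
    induction k with
    | zero => simp only [hS, Set.mem_setOf_eq, hP, pow_zero, Matrix.one_apply_eq]; norm_num
    | succ k ih => exact hmono k ih
  have hgrow : ∀ k, S k ≠ Set.univ → (S k).ncard < (S (k + 1)).ncard := by
    intro k hku
    obtain ⟨a, ha, b, hb, hab⟩ := hirr (S k) ⟨i, hmem k⟩ hku
    have hCab : C a b ≤ (1 + C) a b := by
      have : (1 + C) a b = (1 : Matrix (Fin n) (Fin n) ℝ) a b + C a b := rfl
      rw [this, Matrix.one_apply]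
      by_cases h : a = b <;> simp [h]
    have hbmem : b ∈ S (k + 1) := by
      have h1 : 0 < P k i a * (1 + C) a b :=
        mul_pos ha (lt_of_lt_of_le hab hCab)
      exact lt_of_lt_of_le h1 (hstep k a b)
    have hss : S k ⊂ S (k + 1) := ⟨hmono k, fun hsub => hb (hsub hbmem)⟩
    exact Set.ncard_lt_ncard hss (Set.toFinite _)
  have hcard : ∀ k, S k = Set.univ ∨ k + 1 ≤ (S k).ncard := by
    intro k
    induction k with
    | zero =>
      right
      have : ({i} : Set (Fin n)) ⊆ S 0 := by simp [Set.singleton_subset_iff, hmem 0]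
      calc 1 = ({i} : Set (Fin n)).ncard := by simp
        _ ≤ (S 0).ncard := Set.ncard_le_ncard this (Set.toFinite _)
    | succ k ih =>
      rcases ih with h | h
      · left
        exact Set.eq_univ_of_univ_subset (h ▸ hmono k)
      · by_cases hku : S k = Set.univ
        · left; exact Set.eq_univ_of_univ_subset (hku ▸ hmono k)
        · right
          have := hgrow k hku
          omega
  have hfin : S (n - 1) = Set.univ := by
    rcases hcard (n - 1) with h | h
    · exact h
    · by_contra hne
      have hlt : (S (n - 1)).ncard < n := by
        have hss : S (n - 1) ⊂ Set.univ := (Set.ssubset_univ_iff).2 hne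
        have := Set.ncard_lt_ncard hss (Set.toFinite _)
        simpa [Set.ncard_univ] using this
      omega
  intro j
  have : j ∈ S (n - 1) := hfin ▸ Set.mem_univ j
  exact this

lemma eval_charpoly' (X : Matrix (Fin n) (Fin n) ℂ) (t : ℂ) :
    X.charpoly.eval t = (t • (1 : Matrix (Fin n) (Fin n) ℂ) - X).det := by
  rw [Matrix.charpoly, eval_det, matPolyEquiv_charmatrix]
  congr 1
  rw [Polynomial.eval_sub, Polynomial.eval_X, Polynomial.eval_C]
  congr 1
  ext i j
  simp [Matrix.scalar, Matrix.smul_apply, Matrix.one_apply, Matrix.diagonal_apply]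

lemma eigen_of_mem_spectrum {X : Matrix (Fin n) (Fin n) ℂ} {ν : ℂ} (h : ν ∈ spectrum ℂ X) :
    ∃ w : Fin n → ℂ, w ≠ 0 ∧ X.mulVec w = ν • w := by
  rw [spectrum.mem_iff] at h
  have hdet : (ν • (1 : Matrix (Fin n) (Fin n) ℂ) - X).det = 0 := by
    by_contra hd
    exact h (by
      rw [Algebra.algebraMap_eq_smul_one]
      rw [Matrix.isUnit_iff_isUnit_det]
      exact isUnit_iff_ne_zero.2 hd)
  obtain ⟨w, hw, hmul⟩ := (Matrix.exists_mulVec_eq_zero_iff).2 hdet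
  refine ⟨w, hw, ?_⟩
  rw [sub_mulVec, smul_mulVec, one_mulVec] at hmul
  have := sub_eq_zero.1 hmul
  linear_combination -this

lemma mem_spectrum_of_det {X : Matrix (Fin n) (Fin n) ℂ} {ν : ℂ}
    (h : (ν • (1 : Matrix (Fin n) (Fin n) ℂ) - X).det = 0) : ν ∈ spectrum ℂ X := by
  rw [spectrum.mem_iff, Algebra.algebraMap_eq_smul_one]
  intro hu
  rw [Matrix.isUnit_iff_isUnit_det, h] at hu
  simp at hu

lemma spectrum_finite (X : Matrix (Fin n) (Fin n) ℂ) : (spectrum ℂ X).Finite := by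
  apply Set.Finite.subset (Polynomial.finite_setOf_isRoot (p := X.charpoly) X.charpoly_monic.ne_zero)
  intro ν hν
  rw [spectrum.mem_iff, Algebra.algebraMap_eq_smul_one] at hν
  have hdet : (ν • (1 : Matrix (Fin n) (Fin n) ℂ) - X).det = 0 := by
    by_contra hd
    exact hν ((Matrix.isUnit_iff_isUnit_det _).2 (isUnit_iff_ne_zero.2 hd))
  simp only [Set.mem_setOf_eq, Polynomial.IsRoot, eval_charpoly', hdet]

lemma real_root_mem_spectrum {N : Matrix (Fin n) (Fin n) ℝ} {r : ℝ}
    (h : (r • (1 : Matrix (Fin n) (Fin n) ℝ) - N).det = 0) :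
    (r : ℂ) ∈ spectrum ℂ (N.map (Complex.ofReal ·)) := by
  apply mem_spectrum_of_det
  have hmap : ((r • (1 : Matrix (Fin n) (Fin n) ℝ) - N).map (Complex.ofReal ·))
      = (r : ℂ) • (1 : Matrix (Fin n) (Fin n) ℂ) - N.map (Complex.ofReal ·) := by
    ext i j
    simp only [Matrix.map_apply, Matrix.sub_apply, Matrix.smul_apply, Matrix.one_apply,
      smul_eq_mul]
    by_cases hij : i = j <;> simp [hij]
  rw [← hmap]
  have : ((r • (1 : Matrix (Fin n) (Fin n) ℝ) - N).map (Complex.ofReal ·)).det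
      = Complex.ofRealHom ((r • (1 : Matrix (Fin n) (Fin n) ℝ) - N).det) :=
    (RingHom.map_det Complex.ofRealHom _).symm
  rw [this, h, map_zero]

lemma abs_eigen {C : Matrix (Fin n) (Fin n) ℝ} (hC : ∀ i j, 0 ≤ C i j) {w : Fin n → ℂ} {μ : ℂ}
    (h : (C.map (Complex.ofReal ·)).mulVec w = μ • w) :
    ∀ i, ‖μ‖ * ‖w i‖ ≤ C.mulVec (fun j => ‖w j‖) i := by
  intro i
  have hi : ∑ j, (C i j : ℂ) * w j = μ * w i := by
    have := congrFun h i
    simpa [Matrix.mulVec, dotProduct, Matrix.map_apply] using this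
  calc ‖μ‖ * ‖w i‖ = ‖∑ j, (C i j : ℂ) * w j‖ := by
        rw [hi, norm_mul]
    _ ≤ ∑ j, ‖(C i j : ℂ) * w j‖ := norm_sum_le _ _
    _ = C.mulVec (fun j => ‖w j‖) i := by
        simp only [Matrix.mulVec, dotProduct]
        refine Finset.sum_congr rfl fun j _ => ?_
        rw [norm_mul, Complex.norm_real, Real.norm_eq_abs, abs_of_nonneg (hC i j)]

lemma cw {N : Matrix (Fin n) (Fin n) ℝ} (hn : 1 ≤ n)
    (hN : ∀ i j, 0 ≤ N i j) (hirr : MatIrreducible N) {c : ℝ} {x : Fin n → ℝ}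
    (hx : ∀ i, 0 ≤ x i) (hxne : x ≠ 0) (hcx : ∀ i, c * x i ≤ N.mulVec x i) :
    ∃ r : ℝ, c ≤ r ∧ (r • (1 : Matrix (Fin n) (Fin n) ℝ) - N).det = 0 := by
  haveI : Nonempty (Fin n) := ⟨⟨0, hn⟩⟩
  classical
  set T : Set ℝ := {c' | ∃ y ∈ stdSimplex ℝ (Fin n), ∀ i, c' * y i ≤ N.mulVec y i} with hT
  have hnorm : ∀ (c' : ℝ) (y : Fin n → ℝ), (∀ i, 0 ≤ y i) → y ≠ 0 →
      (∀ i, c' * y i ≤ N.mulVec y i) → c' ∈ T := by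
    intro c' y hy0 hyne hcy
    have hsum : 0 < ∑ j, y j := by
      obtain ⟨j0, hj0⟩ : ∃ j, 0 < y j := by
        by_contra h
        push_neg at h
        exact hyne (funext fun j => le_antisymm (h j) (hy0 j))
      exact Finset.sum_pos' (fun j _ => hy0 j) ⟨j0, mem_univ j0, hj0⟩
    set s := (∑ j, y j)⁻¹ with hs
    have hs0 : 0 < s := inv_pos.2 hsum
    refine ⟨s • y, ⟨fun i => mul_nonneg hs0.le (hy0 i), ?_⟩, ?_⟩
    · simp only [Pi.smul_apply, smul_eq_mul, ← Finset.mul_sum, hs]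
      exact inv_mul_cancel₀ hsum.ne'
    · intro i
      rw [Matrix.mulVec_smul]
      simp only [Pi.smul_apply, smul_eq_mul]
      calc c' * (s * y i) = s * (c' * y i) := by ring
        _ ≤ s * N.mulVec y i := mul_le_mul_of_nonneg_left (hcy i) hs0.le
  have hcT : c ∈ T := hnorm c x hx hxne hcx
  have hTne : T.Nonempty := ⟨c, hcT⟩
  have hTbdd : BddAbove T := by
    refine ⟨∑ i, ∑ j, N i j, fun c' hc' => ?_⟩
    obtain ⟨y, ⟨hy0, hy1⟩, hcy⟩ := hc'
    have hyle : ∀ j, y j ≤ 1 := by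
      intro j
      rw [← hy1]
      exact Finset.single_le_sum (fun k _ => hy0 k) (mem_univ j)
    calc c' = c' * ∑ i, y i := by rw [hy1, mul_one]
      _ = ∑ i, c' * y i := by rw [Finset.mul_sum]
      _ ≤ ∑ i, N.mulVec y i := Finset.sum_le_sum fun i _ => hcy i
      _ = ∑ i, ∑ j, N i j * y j := by
          simp only [Matrix.mulVec, dotProduct]
      _ ≤ ∑ i, ∑ j, N i j := by
          refine Finset.sum_le_sum fun i _ => Finset.sum_le_sum fun j _ => ?_
          calc N i j * y j ≤ N i j * 1 := mul_le_mul_of_nonneg_left (hyle j) (hN i j)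
            _ = N i j := mul_one _
  set r := sSup T with hr
  have hcr : c ≤ r := le_csSup hTbdd hcT
  have hFIP : ∃ y ∈ stdSimplex ℝ (Fin n), ∀ c' ∈ T, ∀ i, c' * y i ≤ N.mulVec y i := by
    haveI : Nonempty T := ⟨⟨c, hcT⟩⟩
    set F : T → Set (Fin n → ℝ) := fun c' =>
      stdSimplex ℝ (Fin n) ∩ ⋂ i, {y | c'.1 * y i ≤ ∑ j, N i j * y j} with hF
    have hmulVec : ∀ (y : Fin n → ℝ) i, N.mulVec y i = ∑ j, N i j * y j := by
      intro y i; simp [Matrix.mulVec, dotProduct]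
    have hFmem : ∀ (c' : T) (y : Fin n → ℝ),
        y ∈ F c' ↔ y ∈ stdSimplex ℝ (Fin n) ∧ ∀ i, c'.1 * y i ≤ N.mulVec y i := by
      intro c' y
      simp only [hF, Set.mem_inter_iff, Set.mem_iInter, Set.mem_setOf_eq, hmulVec]
    have hdir : Directed (· ⊇ ·) F := by
      intro a b
      rcases le_total a.1 b.1 with hab | hab
      · refine ⟨b, ?_, fun y hy => hy⟩
        intro y hy
        rw [hFmem] at hy ⊢
        refine ⟨hy.1, fun i => le_trans ?_ (hy.2 i)⟩
        exact mul_le_mul_of_nonneg_right hab (hy.1.1 i)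
      · refine ⟨a, fun y hy => hy, ?_⟩
        intro y hy
        rw [hFmem] at hy ⊢
        refine ⟨hy.1, fun i => le_trans ?_ (hy.2 i)⟩
        exact mul_le_mul_of_nonneg_right hab (hy.1.1 i)
    have hclosed : ∀ c' : T, IsClosed (F c') := by
      intro c'
      refine (isClosed_stdSimplex ℝ (Fin n)).inter (isClosed_iInter fun i => ?_)
      exact isClosed_le (continuous_const.mul (continuous_apply i))
        (continuous_finset_sum _ fun j _ => continuous_const.mul (continuous_apply j))
    have hne : ∀ c' : T, (F c').Nonempty := by
      intro c'
      obtain ⟨y, hy, hcy⟩ := c'.2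
      exact ⟨y, (hFmem c' y).2 ⟨hy, hcy⟩⟩
    have hcomp : ∀ c' : T, IsCompact (F c') :=
      fun c' => (isCompact_stdSimplex ℝ (Fin n)).of_isClosed_subset (hclosed c')
        (Set.inter_subset_left)
    obtain ⟨y, hy⟩ := IsCompact.nonempty_iInter_of_directed_nonempty_isCompact_isClosed
      F hdir hne hcomp hclosed
    simp only [Set.mem_iInter] at hy
    have hyΔ : y ∈ stdSimplex ℝ (Fin n) := ((hFmem ⟨c, hcT⟩ y).1 (hy ⟨c, hcT⟩)).1
    exact ⟨y, hyΔ, fun c' hc' i => ((hFmem ⟨c', hc'⟩ y).1 (hy ⟨c', hc'⟩)).2 i⟩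
  obtain ⟨y, ⟨hy0, hy1⟩, hyT⟩ := hFIP
  have hyne : y ≠ 0 := by
    intro h
    rw [h] at hy1
    simp at hy1
  have hry : ∀ i, r * y i ≤ N.mulVec y i := by
    intro i
    rcases eq_or_lt_of_le (hy0 i) with h0 | h0
    · rw [← h0, mul_zero]
      exact mulVec_nonneg hN hy0 i
    · have : r ≤ N.mulVec y i / y i := by
        refine csSup_le hTne fun c' hc' => ?_
        rw [le_div_iff₀ h0]
        exact hyT c' hc' i
      rw [← le_div_iff₀ h0] at *
      exact this
  set P := (1 + N) ^ (n - 1) with hPdef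
  have hPpos : ∀ i j, 0 < P i j := pow_one_add_pos hn hN hirr
  by_cases heq : N.mulVec y = r • y
  · refine ⟨r, hcr, (Matrix.exists_mulVec_eq_zero_iff).1 ⟨y, hyne, ?_⟩⟩
    rw [sub_mulVec, smul_mulVec, one_mulVec, heq, sub_self]
  · exfalso
    set w := N.mulVec y - r • y with hw
    have hw0 : ∀ i, 0 ≤ w i := fun i => by
      simp only [hw, Pi.sub_apply, Pi.smul_apply, smul_eq_mul, sub_nonneg]
      exact hry i
    have hwne : w ≠ 0 := fun h => heq (by rwa [hw, sub_eq_zero] at h)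
    set z := P.mulVec y with hz
    set u := P.mulVec w with hu
    have hzpos : ∀ i, 0 < z i := mulVec_pos hPpos hy0 hyne
    have hupos : ∀ i, 0 < u i := mulVec_pos hPpos hw0 hwne
    have hcomm : N * P = P * N := by
      have : Commute N ((1 + N) ^ (n - 1)) :=
        (Commute.add_right (Commute.one_right N) (Commute.refl N)).pow_right _
      exact this.eq
    have hNz : N.mulVec z = r • z + u := by
      rw [hz, hu, hw, Matrix.mulVec_mulVec, hcomm, ← Matrix.mulVec_mulVec]
      rw [Matrix.mulVec_sub, Matrix.mulVec_smul]
      abel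
    set mz := Finset.univ.sup' Finset.univ_nonempty z with hmz
    set mu := Finset.univ.inf' Finset.univ_nonempty u with hmu
    have hmzpos : 0 < mz := lt_of_lt_of_le (hzpos (Classical.arbitrary _))
      (Finset.le_sup' z (mem_univ _))
    have hmupos : 0 < mu := (Finset.lt_inf'_iff _).2 fun i _ => hupos i
    set ε := mu / mz with hε
    have hεpos : 0 < ε := div_pos hmupos hmzpos
    have hstep : ∀ i, (r + ε) * z i ≤ N.mulVec z i := by
      intro i
      have h1 : ε * z i ≤ ε * mz :=
        mul_le_mul_of_nonneg_left (Finset.le_sup' z (mem_univ i)) hεpos.le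
      have h2 : ε * mz = mu := by
        rw [hε, div_mul_cancel₀ _ hmzpos.ne']
      have h3 : mu ≤ u i := Finset.inf'_le u (mem_univ i)
      have h4 : N.mulVec z i = r * z i + u i := by
        rw [hNz]; simp [Pi.add_apply, Pi.smul_apply, smul_eq_mul]
      rw [h4]
      nlinarith
    have : r + ε ∈ T :=
      hnorm (r + ε) z (fun i => (hzpos i).le) (fun h => (hzpos (Classical.arbitrary _)).ne'
        (by rw [h]; rfl)) hstep
    have : r + ε ≤ r := le_csSup hTbdd this
    linarith

end Stmt13Aux

open Stmt13Aux Finset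

theorem stmt13 {n : ℕ} (hn : 2 ≤ n) (A : Matrix (Fin n) (Fin n) ℝ)
    (hA : ∀ i j, 0 ≤ A i j) (hirr : MatIrreducible A)
    (β g : Fin n → ℝ) (hβ : ∀ i, 0 < β i) (hg : ∀ i, 0 < g i)
    (hs : 0 < specAbs (Matrix.diagonal β * A - Matrix.diagonal g)) :
    1 < specAbs ((Matrix.diagonal g)⁻¹ * (Matrix.diagonal β * A)) := by
  classical
  have hn1 : 1 ≤ n := by omega
  haveI : Nonempty (Fin n) := ⟨⟨0, by omega⟩⟩
  set M := Matrix.diagonal β * A with hMdef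
  set Γ := Matrix.diagonal g with hΓdef
  have hMentry : ∀ i j, M i j = β i * A i j := fun i j => Matrix.diagonal_mul β A i j
  have hMnn : ∀ i j, 0 ≤ M i j := fun i j => by
    rw [hMentry]; exact mul_nonneg (hβ i).le (hA i j)
  have hMirr : MatIrreducible M := by
    intro S hS hSu
    obtain ⟨i, hi, j, hj, hij⟩ := hirr S hS hSu
    exact ⟨i, hi, j, hj, by rw [hMentry]; exact mul_pos (hβ i) hij⟩
  -- step 1 : an eigenvalue of M - Γ with positive real part
  obtain ⟨ν, hν, hνre⟩ : ∃ ν ∈ spectrum ℂ ((M - Γ).map (Complex.ofReal ·)), 0 < ν.re := by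
    by_contra h
    push_neg at h
    have hle : specAbs (M - Γ) ≤ 0 := by
      apply Real.sSup_nonpos
      rintro a ⟨z, hz, rfl⟩
      exact h z hz
    rw [hMdef, hΓdef] at hle
    exact absurd hs (not_lt.2 hle)
  obtain ⟨w, hwne, hweq⟩ := eigen_of_mem_spectrum hν
  -- step 2 : shift by c₀ to get a nonnegative matrix C
  set c₀ := Finset.univ.sup' Finset.univ_nonempty g with hc₀
  have hgc₀ : ∀ i, g i ≤ c₀ := fun i => Finset.le_sup' g (mem_univ i)
  have hc₀pos : 0 < c₀ := lt_of_lt_of_le (hg (Classical.arbitrary _)) (hgc₀ _)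
  set C := M - Γ + c₀ • (1 : Matrix (Fin n) (Fin n) ℝ) with hCdef
  have hCentry : ∀ i j, C i j = M i j - Γ i j + c₀ * (1 : Matrix (Fin n) (Fin n) ℝ) i j :=
    fun i j => rfl
  have hCnn : ∀ i j, 0 ≤ C i j := by
    intro i j
    rw [hCentry, hΓdef]
    by_cases hij : i = j
    · subst hij
      simp only [Matrix.diagonal_apply_eq, Matrix.one_apply_eq, mul_one]
      have := hMnn i i; have := hgc₀ i; linarith
    · simp only [Matrix.diagonal_apply_ne _ hij, Matrix.one_apply_ne hij, mul_zero]
      have := hMnn i j; linarith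
  have hCirr : MatIrreducible C := by
    intro S hS hSu
    obtain ⟨i, hi, j, hj, hij⟩ := hMirr S hS hSu
    have hijne : i ≠ j := fun h => hj (h ▸ hi)
    refine ⟨i, hi, j, hj, ?_⟩
    rw [hCentry, hΓdef]
    simp only [Matrix.diagonal_apply_ne _ hijne, Matrix.one_apply_ne hijne, mul_zero]
    linarith
  have hCeig : (C.map (Complex.ofReal ·)).mulVec w = (ν + (c₀ : ℂ)) • w := by
    have hmapC : C.map (Complex.ofReal ·)
        = (M - Γ).map (Complex.ofReal ·) + (c₀ : ℂ) • (1 : Matrix (Fin n) (Fin n) ℂ) := by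
      ext i j
      simp only [Matrix.map_apply, Matrix.add_apply, Matrix.smul_apply, Matrix.one_apply,
        smul_eq_mul, hCdef]
      by_cases hij : i = j <;> simp [hij]
    rw [hmapC, Matrix.add_mulVec, hweq, Matrix.smul_mulVec, Matrix.one_mulVec, add_smul]
  -- step 3 : absolute values give a nonnegative subinvariant vector for C
  set x : Fin n → ℝ := fun i => ‖w i‖ with hx
  have hxnn : ∀ i, 0 ≤ x i := fun i => (norm_nonneg _)
  have hxne : x ≠ 0 := by
    intro h
    apply hwne
    funext i
    have := congrFun h i
    simpa [hx, norm_eq_zero] using this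
  set s := ‖ν + (c₀ : ℂ)‖ with hsdef
  have hsx : ∀ i, s * x i ≤ C.mulVec x i := abs_eigen hCnn hCeig
  have hsgt : c₀ < s := by
    have h1 : (ν + (c₀ : ℂ)).re ≤ s := Complex.re_le_norm _
    have h2 : (ν + (c₀ : ℂ)).re = ν.re + c₀ := by simp
    linarith
  -- step 4 : upgrade to a strictly positive vector v
  set Q := (1 + C) ^ (n - 1) with hQ
  have hQpos : ∀ i j, 0 < Q i j := pow_one_add_pos hn1 hCnn hCirr
  have hQnn : ∀ i j, 0 ≤ Q i j := fun i j => (hQpos i j).le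
  set v := Q.mulVec x with hv
  have hvpos : ∀ i, 0 < v i := mulVec_pos hQpos hxnn hxne
  have hcommCQ : C * Q = Q * C := by
    have : Commute C ((1 + C) ^ (n - 1)) :=
      (Commute.add_right (Commute.one_right C) (Commute.refl C)).pow_right _
    exact this.eq
  have hCv : ∀ i, s * v i ≤ C.mulVec v i := by
    intro i
    have hkey : C.mulVec v = Q.mulVec (C.mulVec x) := by
      rw [hv, Matrix.mulVec_mulVec, hcommCQ, ← Matrix.mulVec_mulVec]
    have hnn : 0 ≤ Q.mulVec (C.mulVec x - s • x) i := by
      apply mulVec_nonneg hQnn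
      intro k
      simp only [Pi.sub_apply, Pi.smul_apply, smul_eq_mul, sub_nonneg]
      exact hsx k
    rw [Matrix.mulVec_sub, Matrix.mulVec_smul] at hnn
    have hsv : (s • Q.mulVec x) i = s * v i := by simp [hv]
    have := hnn
    simp only [Pi.sub_apply] at this
    rw [hkey]
    have : s * v i ≤ Q.mulVec (C.mulVec x) i := by
      have h2 := this
      rw [hsv] at h2
      linarith
    exact this
  -- step 5 : translate to N = Γ⁻¹ M
  set N := Matrix.diagonal (fun i => (g i)⁻¹) * M with hNdef
  have hNentry : ∀ i j, N i j = (g i)⁻¹ * M i j := fun i j =>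
    Matrix.diagonal_mul _ M i j
  have hNnn : ∀ i j, 0 ≤ N i j := fun i j => by
    rw [hNentry]; exact mul_nonneg (inv_nonneg.2 (hg i).le) (hMnn i j)
  have hNirr : MatIrreducible N := by
    intro S hS hSu
    obtain ⟨i, hi, j, hj, hij⟩ := hMirr S hS hSu
    exact ⟨i, hi, j, hj, by rw [hNentry]; exact mul_pos (inv_pos.2 (hg i)) hij⟩
  have hNmulVec : ∀ (y : Fin n → ℝ) i, N.mulVec y i = (g i)⁻¹ * M.mulVec y i := by
    intro y i
    simp only [hNdef, Matrix.mulVec, dotProduct, Matrix.diagonal_mul, Finset.mul_sum,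
      mul_assoc]
  set c₁ := 1 + (s - c₀) / c₀ with hc₁
  have hc₁gt : 1 < c₁ := by
    have : 0 < (s - c₀) / c₀ := div_pos (by linarith) hc₀pos
    rw [hc₁]; linarith
  have hNv : ∀ i, c₁ * v i ≤ N.mulVec v i := by
    intro i
    have hCvi : C.mulVec v i = M.mulVec v i - g i * v i + c₀ * v i := by
      rw [hCdef, Matrix.add_mulVec, Matrix.sub_mulVec, Matrix.smul_mulVec,
        Matrix.one_mulVec, hΓdef]
      simp only [Pi.add_apply, Pi.sub_apply, Pi.smul_apply, smul_eq_mul]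
      rw [Matrix.mulVec_diagonal]
    have hMv : g i * v i + (s - c₀) * v i ≤ M.mulVec v i := by
      have := hCv i
      rw [hCvi] at this
      linarith
    set q := (s - c₀) / c₀ with hq
    have hqc : q * c₀ = s - c₀ := div_mul_cancel₀ _ hc₀pos.ne'
    have hqpos : 0 < q := div_pos (by linarith) hc₀pos
    have hkey : g i * (c₁ * v i) ≤ M.mulVec v i := by
      have h1 : g i * (c₁ * v i) = g i * v i + (g i * q) * v i := by rw [hc₁]; ring
      have h2 : (g i * q) * v i ≤ (s - c₀) * v i := by
        have : g i * q ≤ c₀ * q := mul_le_mul_of_nonneg_right (hgc₀ i) hqpos.le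
        have h3 : c₀ * q = s - c₀ := by rw [mul_comm]; exact hqc
        nlinarith [hvpos i]
      linarith
    rw [hNmulVec]
    have := mul_le_mul_of_nonneg_left hkey (inv_nonneg.2 (hg i).le)
    rwa [inv_mul_cancel_left₀ (hg i).ne'] at this
  -- step 6 : apply the Collatz–Wielandt lemma
  obtain ⟨r, hrge, hrdet⟩ := cw hn1 hNnn hNirr (fun i => (hvpos i).le)
    (fun h => (hvpos (Classical.arbitrary _)).ne' (by rw [h]; rfl)) hNv
  have hrmem : (r : ℂ) ∈ spectrum ℂ (N.map (Complex.ofReal ·)) := real_root_mem_spectrum hrdet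
  -- step 7 : conclude
  have hgoal : (Matrix.diagonal g)⁻¹ * (Matrix.diagonal β * A) = N := by
    rw [hNdef, hMdef, Matrix.inv_diagonal]
    congr 2
    letI : Invertible g := ⟨fun i => (g i)⁻¹,
      funext fun i => inv_mul_cancel₀ (hg i).ne',
      funext fun i => mul_inv_cancel₀ (hg i).ne'⟩
    rw [Ring.inverse_invertible]
    rfl
  rw [hgoal, specAbs]
  have hbdd : BddAbove (Complex.re '' spectrum ℂ (N.map (Complex.ofReal ·))) :=
    ((spectrum_finite _).image _).bddAbove
  have hle : r ≤ sSup (Complex.re '' spectrum ℂ (N.map (Complex.ofReal ·))) := by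
    apply le_csSup hbdd
    exact ⟨(r : ℂ), hrmem, by simp⟩
  linarith
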